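/- Let (A, L) be an extended complete spectral metric space. Then the state space of A is complete for the spectral distance: for every sequence (φ_n) of states on A that is d_L-Cauchy (for every ε > 0 there is N such that d_L(φ_n, φ_m) ≤ ε for all n, m ≥ N), there exists a state φ on A with d_L(φ_n, φ) → 0. -/

import Mathlib

open Filter Topology
open scoped ComplexOrder ENNReal NNReal MultiplierAlgebra

noncomputable section

/-- A *state* on a C⋆-algebra: a continuous linear functional into `ℂ` that is nonnegative
on nonnegative elements and has norm `1`. -/
def IsState {E : Type*} [NormedAddCommGroup E] [NormedSpace ℂ E] [PartialOrder E]
    (φ : E →L[ℂ] ℂ) : Prop :=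
  (∀ a : E, 0 ≤ a → 0 ≤ φ a) ∧ ‖φ‖ = 1

variable {A : Type*} [NonUnitalCStarAlgebra A] [PartialOrder A] [StarOrderedRing A]

/-- `L` is an extended seminorm on the self-adjoint part `A_sa` of `A`:
`L (t • b) = |t| * L b` for real `t`, and `L (b + b') ≤ L b + L b'`. -/
def IsESeminorm (L : selfAdjoint A → ℝ≥0∞) : Prop :=
  (∀ (t : ℝ) (b : selfAdjoint A), L (t • b) = (‖t‖₊ : ℝ≥0∞) * L b) ∧
    ∀ b b' : selfAdjoint A, L (b + b') ≤ L b + L b'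

/-- The spectral distance `d_L(φ, ψ) = sup { |φ b - ψ b| : b ∈ A_sa, L b ≤ 1 }`,
valued in `[0, ∞]`. -/
def dL (L : selfAdjoint A → ℝ≥0∞) (φ ψ : A → ℂ) : ℝ≥0∞ :=
  ⨆ b : {b : selfAdjoint A // L b ≤ 1}, (‖φ (b.1 : A) - ψ (b.1 : A)‖₊ : ℝ≥0∞)

/-- An approximate identity for `A`: a net `(I n)` with `0 ≤ I n`, `‖I n‖ ≤ 1`, and
`‖I n * a - a‖ → 0`, `‖a * I n - a‖ → 0` for every `a : A`. -/
def IsApproxUnit {ι : Type*} [Preorder ι] (I : ι → A) : Prop :=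
  (∀ n, 0 ≤ I n) ∧ (∀ n, ‖I n‖ ≤ 1) ∧
    ∀ a : A, Tendsto (fun n => ‖I n * a - a‖) atTop (𝓝 0) ∧
      Tendsto (fun n => ‖a * I n - a‖) atTop (𝓝 0)

/-- A (self-adjoint valued) approximate identity `(I n)` for `A` along which `L` tends to `0`. -/
structure SpectralAUData (L : selfAdjoint A → ℝ≥0∞) where
  ι : Type
  [pre : Preorder ι]
  [ne : Nonempty ι]
  [dir : IsDirected ι (· ≤ ·)]
  I : ι → selfAdjoint A
  isAU : IsApproxUnit fun n => (I n : A)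
  tendsto_L : Tendsto (fun n => L (I n)) atTop (𝓝 0)

/-- `(A, L)` is an extended complete spectral metric space: the finite-`L` self-adjoint
elements are dense, there is an approximate identity along which `L` tends to `0`, and
`L` is norm-lower semicontinuous. -/
structure IsECSMS (L : selfAdjoint A → ℝ≥0∞) : Prop where
  seminorm : IsESeminorm L
  dense_finite : Dense {b : selfAdjoint A | L b < ⊤}
  lsc : LowerSemicontinuous L
  approxUnit : Nonempty (SpectralAUData L)

namespace DLAux


lemma re_nonneg_of_pos {z : ℂ} (h : 0 ≤ z) : 0 ≤ z.re := (Complex.nonneg_iff.mp h).1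
lemma im_eq_zero_of_pos {z : ℂ} (h : 0 ≤ z) : z.im = 0 := ((Complex.nonneg_iff.mp h).2).symm

lemma conj_eq_of_pos (f : A →L[ℂ] ℂ) (hf : ∀ a : A, 0 ≤ a → 0 ≤ f a)
    {b : A} (hb : IsSelfAdjoint b) : (starRingEnd ℂ) (f b) = f b := by
  have h1 : (f b⁺).im = 0 := im_eq_zero_of_pos (hf _ (CFC.posPart_nonneg b))
  have h2 : (f b⁻).im = 0 := im_eq_zero_of_pos (hf _ (CFC.negPart_nonneg b))
  have hb' : f b = f b⁺ - f b⁻ := by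
    conv_lhs => rw [← CFC.posPart_sub_negPart b hb]
    simp
  rw [Complex.conj_eq_iff_im, hb', Complex.sub_im, h1, h2, sub_zero]

lemma map_star_eq (f : A →L[ℂ] ℂ) (hf : ∀ a : A, 0 ≤ a → 0 ≤ f a) (a : A) :
    f (star a) = (starRingEnd ℂ) (f a) := by
  have hdecomp : (realPart a : A) + Complex.I • (imaginaryPart a : A) = a :=
    realPart_add_I_smul_imaginaryPart a
  have hre := conj_eq_of_pos f hf (realPart a).2
  have him := conj_eq_of_pos f hf (imaginaryPart a).2
  have hstar : star a = (realPart a : A) - Complex.I • (imaginaryPart a : A) := by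
    conv_lhs => rw [← hdecomp]
    rw [star_add, star_smul]
    simp [(realPart a).2.star_eq, (imaginaryPart a).2.star_eq, Complex.star_def,
      Complex.conj_I, neg_smul, sub_eq_add_neg]
  set r : A := (realPart a : A) with hrdef
  set i : A := (imaginaryPart a : A) with hidef
  rw [hstar, ← hdecomp]
  simp only [map_sub, map_add, map_smul, smul_eq_mul, map_mul, Complex.conj_I, hre, him]
  ring

lemma re_mono (f : A →L[ℂ] ℂ) (hf : ∀ a : A, 0 ≤ a → 0 ≤ f a)
    {a b : A} (hab : a ≤ b) : (f a).re ≤ (f b).re := by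
  have h := re_nonneg_of_pos (hf _ (sub_nonneg.2 hab))
  rw [map_sub, Complex.sub_re] at h
  linarith

lemma mul_self_le_self {a : A} (ha : 0 ≤ a) (ha1 : ‖a‖ ≤ 1) : a * a ≤ a := by
  have h := CStarAlgebra.inr_mem_Icc_iff_norm_le.mpr ⟨ha, ha1⟩
  have h2 := CStarAlgebra.pow_antitone h.1 h.2 (by norm_num : (1:ℕ) ≤ 2)
  have hsa : IsSelfAdjoint a := .of_nonneg ha
  have hsa2 : IsSelfAdjoint (a * a) := by simpa [hsa.star_eq] using IsSelfAdjoint.star_mul_self a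
  rw [← Unitization.inr_le_iff (a * a) a hsa2 hsa]
  simpa [pow_succ, pow_one, Unitization.inr_mul] using h2

lemma cauchy_schwarz (f : A →L[ℂ] ℂ) (hf : ∀ a : A, 0 ≤ a → 0 ≤ f a) (x y : A) :
    ‖f (star x * y)‖ ^ 2 ≤ (f (star x * x)).re * (f (star y * y)).re := by
  set z := f (star x * y) with hz
  set X := (f (star x * x)).re with hX
  set Y := (f (star y * y)).re with hY
  have hX0 : 0 ≤ X := re_nonneg_of_pos (hf _ (star_mul_self_nonneg x))
  have hY0 : 0 ≤ Y := re_nonneg_of_pos (hf _ (star_mul_self_nonneg y))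
  have hyx : f (star y * x) = (starRingEnd ℂ) z := by
    have h1 : star (star x * y) = star y * x := by simp [star_mul]
    rw [← h1, map_star_eq f hf]
  have hzz : z * (starRingEnd ℂ) z = (‖z‖ : ℂ) ^ 2 := by
    rw [Complex.mul_conj, Complex.normSq_eq_norm_sq]
    push_cast
    ring
  set c : ℂ := if z = 0 then 1 else -(starRingEnd ℂ) z / ‖z‖ with hc
  have hc1 : (starRingEnd ℂ) c * c = 1 := by
    rw [hc]
    split_ifs with h
    · simp
    · have hznorm : (‖z‖ : ℂ) ≠ 0 := by exact_mod_cast norm_ne_zero_iff.mpr h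
      have hconj : (starRingEnd ℂ) (-(starRingEnd ℂ) z / (‖z‖ : ℂ)) = -z / (‖z‖ : ℂ) := by
        simp [map_div₀, Complex.conj_ofReal]
      rw [hconj]
      calc -z / (‖z‖ : ℂ) * (-(starRingEnd ℂ) z / (‖z‖ : ℂ))
          = (z * (starRingEnd ℂ) z) / ((‖z‖ : ℂ) * (‖z‖ : ℂ)) := by ring
        _ = 1 := by rw [hzz, sq]; exact div_self (mul_ne_zero hznorm hznorm)
  have hcz : c * z = -(‖z‖ : ℂ) := by
    rw [hc]
    split_ifs with h
    · simp [h]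
    · have hznorm : (‖z‖ : ℂ) ≠ 0 := by exact_mod_cast norm_ne_zero_iff.mpr h
      calc -(starRingEnd ℂ) z / (‖z‖ : ℂ) * z = -((z * (starRingEnd ℂ) z) / (‖z‖ : ℂ)) := by ring
        _ = -(‖z‖ : ℂ) := by rw [hzz, sq, mul_div_assoc, div_self hznorm, mul_one]
  have key : ∀ t : ℝ, 0 ≤ t ^ 2 * X - 2 * t * ‖z‖ + Y := by
    intro t
    set v : A := (t : ℂ) • x + c • y with hv
    have hpos := hf _ (star_mul_self_nonneg v)
    have hexp : f (star v * v)
        = (t : ℂ) ^ 2 * f (star x * x) + ((t : ℂ) * c) * z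
          + ((t : ℂ) * (starRingEnd ℂ) c) * (starRingEnd ℂ) z
          + ((starRingEnd ℂ) c * c) * f (star y * y) := by
      rw [hv]
      rw [star_add, star_smul, star_smul, add_mul, mul_add, mul_add]
      simp only [smul_mul_assoc, mul_smul_comm, smul_smul, map_add, map_smul, smul_eq_mul,
        Complex.star_def, Complex.conj_ofReal, hyx]
      rw [hz]
      ring
    have hexp' : f (star v * v)
        = ((t ^ 2 : ℝ) : ℂ) * f (star x * x) + ((-2 * t * ‖z‖ : ℝ) : ℂ) + f (star y * y) := by
      have hcz' : (starRingEnd ℂ) c * (starRingEnd ℂ) z = -(‖z‖ : ℂ) := by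
        rw [← map_mul, hcz]
        simp [Complex.conj_ofReal]
      rw [hexp, hc1, one_mul, mul_assoc, hcz, mul_assoc, hcz']
      push_cast
      ring
    have hre' : (f (star v * v)).re = t ^ 2 * X - 2 * t * ‖z‖ + Y := by
      rw [hexp']
      simp only [Complex.add_re, Complex.re_ofReal_mul, Complex.ofReal_re]
      rw [hX, hY]
      ring
    have h0 := re_nonneg_of_pos hpos
    linarith [hre' ▸ h0]
  rcases eq_or_lt_of_le hX0 with hXeq | hXpos
  · have hznorm : ‖z‖ = 0 := by
      by_contra h
      have hz0 : 0 < ‖z‖ := lt_of_le_of_ne (norm_nonneg _) (Ne.symm h)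
      have gen : ∀ w : ℝ, w ≠ 0 → 2 * ((Y + 1) / (2 * w)) * w = Y + 1 := by
        intro w hw; field_simp
      have h2t := gen ‖z‖ h
      have hk := key ((Y + 1) / (2 * ‖z‖))
      rw [← hXeq] at hk
      simp only [mul_zero, zero_sub, zero_mul] at hk
      linarith
    rw [hznorm, ← hXeq]
    nlinarith
  · set t := ‖z‖ / X with ht
    have htX : t * X = ‖z‖ := div_mul_cancel₀ _ hXpos.ne'
    have ht2 : t ^ 2 * X = t * ‖z‖ := by rw [← htX]; ring
    have h1 : t * ‖z‖ ≤ Y := by linarith [key t, ht2]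
    calc ‖z‖ ^ 2 = X * (t * ‖z‖) := by rw [← htX]; ring
      _ ≤ X * Y := mul_le_mul_of_nonneg_left h1 hXpos.le


section Est
variable (L : selfAdjoint A → ℝ≥0∞)

lemma L_le_one_smul (hsem : IsESeminorm L) {b : selfAdjoint A} {C : ℝ} (hC : 0 < C)
    (hb : L b ≤ ENNReal.ofReal C) : L ((C⁻¹ : ℝ) • b) ≤ 1 := by
  rw [hsem.1]
  calc (‖(C⁻¹ : ℝ)‖₊ : ℝ≥0∞) * L b ≤ ENNReal.ofReal C⁻¹ * ENNReal.ofReal C := by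
        rw [← enorm_eq_nnnorm, Real.enorm_eq_ofReal (by positivity)]
        exact mul_le_mul_right hb _
    _ = ENNReal.ofReal (C⁻¹ * C) := (ENNReal.ofReal_mul (by positivity)).symm
    _ = 1 := by rw [inv_mul_cancel₀ hC.ne', ENNReal.ofReal_one]

lemma dist_apply_le (hsem : IsESeminorm L) {φ ψ : A →L[ℂ] ℂ} {ε : ℝ≥0}
    (hd : dL L ⇑φ ⇑ψ ≤ ε) (b : selfAdjoint A) {C : ℝ} (hC : 0 < C)
    (hb : L b ≤ ENNReal.ofReal C) : ‖φ (b : A) - ψ (b : A)‖ ≤ C * ε := by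
  set b' : selfAdjoint A := (C⁻¹ : ℝ) • b with hb'
  have hLb' : L b' ≤ 1 := L_le_one_smul L hsem hC hb
  have key : (‖φ (b' : A) - ψ (b' : A)‖₊ : ℝ≥0∞) ≤ (ε : ℝ≥0∞) :=
    le_trans (le_iSup (fun b : {b : selfAdjoint A // L b ≤ 1} =>
      (‖φ (b.1 : A) - ψ (b.1 : A)‖₊ : ℝ≥0∞)) ⟨b', hLb'⟩) hd
  have key' : ‖φ (b' : A) - ψ (b' : A)‖ ≤ (ε : ℝ) := by
    have := ENNReal.coe_le_coe.mp key
    exact_mod_cast this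
  have hcoe : (b' : A) = (C⁻¹ : ℝ) • (b : A) := rfl
  have heq : φ (b' : A) - ψ (b' : A) = (C⁻¹ : ℝ) • (φ (b : A) - ψ (b : A)) := by
    rw [hcoe, φ.map_smul_of_tower, ψ.map_smul_of_tower, smul_sub]
  rw [heq, norm_smul, Real.norm_eq_abs, abs_of_pos (by positivity)] at key'
  calc ‖φ (b : A) - ψ (b : A)‖ = C * (C⁻¹ * ‖φ (b : A) - ψ (b : A)‖) := by
        field_simp
    _ ≤ C * ε := by
        apply mul_le_mul_of_nonneg_left key' hC.le

end Est

section Limit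
variable {L : selfAdjoint A → ℝ≥0∞} {φn : ℕ → A →L[ℂ] ℂ}

lemma tendsto_eval_of_finite (hsem : IsESeminorm L)
    (hcauchy : ∀ ε : ℝ≥0∞, 0 < ε → ∃ N : ℕ, ∀ m n : ℕ, N ≤ m → N ≤ n →
      dL L ⇑(φn m) ⇑(φn n) ≤ ε)
    (b : selfAdjoint A) (hb : L b < ⊤) :
    ∃ l, Tendsto (fun n => φn n (b : A)) atTop (𝓝 l) := by
  have hcs : CauchySeq (fun n => φn n (b : A)) := by
    rw [Metric.cauchySeq_iff]
    intro εr hεr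
    set C : ℝ := (L b).toReal + 1 with hC
    have hC0 : 0 < C := by positivity
    have hbC : L b ≤ ENNReal.ofReal C := by
      conv_lhs => rw [← ENNReal.ofReal_toReal hb.ne]
      exact ENNReal.ofReal_le_ofReal (by simp [hC])
    set δ : ℝ := εr / (2 * C) with hδ
    have hδ0 : 0 < δ := by positivity
    obtain ⟨N, hN⟩ := hcauchy (ENNReal.ofReal δ) (by simpa using hδ0)
    refine ⟨N, fun m hm n hn => ?_⟩
    have hd : dL L ⇑(φn m) ⇑(φn n) ≤ ((Real.toNNReal δ : ℝ≥0) : ℝ≥0∞) := hN m n hm hn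
    have hest := dist_apply_le L hsem hd b hC0 hbC
    rw [dist_eq_norm]
    calc ‖φn m (b : A) - φn n (b : A)‖ ≤ C * (Real.toNNReal δ : ℝ) := hest
      _ = C * δ := by rw [Real.coe_toNNReal δ hδ0.le]
      _ = εr / 2 := by rw [hδ]; field_simp
      _ < εr := by linarith
  exact cauchySeq_tendsto_of_complete hcs

lemma tendsto_eval_of_approx (hb : ∀ n, ‖φn n‖ ≤ 1) (a : A)
    (h : ∀ ε : ℝ, 0 < ε → ∃ a' : A,
      (∃ l, Tendsto (fun n => φn n a') atTop (𝓝 l)) ∧ ‖a - a'‖ ≤ ε) :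
    ∃ l, Tendsto (fun n => φn n a) atTop (𝓝 l) := by
  have hcs : CauchySeq (fun n => φn n a) := by
    rw [Metric.cauchySeq_iff]
    intro εr hεr
    obtain ⟨a', ⟨l, hl⟩, hnear⟩ := h (εr / 4) (by positivity)
    have hcs' : CauchySeq (fun n => φn n a') := hl.cauchySeq
    rw [Metric.cauchySeq_iff] at hcs'
    obtain ⟨N, hN⟩ := hcs' (εr / 4) (by positivity)
    refine ⟨N, fun m hm n hn => ?_⟩
    have h1 : ∀ k, ‖φn k a - φn k a'‖ ≤ εr / 4 := fun k => by
      calc ‖φn k a - φn k a'‖ = ‖φn k (a - a')‖ := by rw [map_sub]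
        _ ≤ ‖φn k‖ * ‖a - a'‖ := (φn k).le_opNorm _
        _ ≤ 1 * (εr / 4) := mul_le_mul (hb k) hnear (norm_nonneg _) zero_le_one
        _ = εr / 4 := one_mul _
    have h2 := hN m hm n hn
    calc dist (φn m a) (φn n a)
        ≤ dist (φn m a) (φn m a') + dist (φn m a') (φn n a') + dist (φn n a') (φn n a) :=
          dist_triangle4 _ _ _ _
      _ < εr := by
          simp only [dist_eq_norm] at h2 ⊢
          have h3 : ‖φn n a' - φn n a‖ = ‖φn n a - φn n a'‖ := norm_sub_rev _ _
          linarith [h1 m, h1 n, h2, h3]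
  exact cauchySeq_tendsto_of_complete hcs

lemma tendsto_eval_sa (hL : IsECSMS L) (hb1 : ∀ n, ‖φn n‖ ≤ 1)
    (hcauchy : ∀ ε : ℝ≥0∞, 0 < ε → ∃ N : ℕ, ∀ m n : ℕ, N ≤ m → N ≤ n →
      dL L ⇑(φn m) ⇑(φn n) ≤ ε)
    (b : selfAdjoint A) : ∃ l, Tendsto (fun n => φn n (b : A)) atTop (𝓝 l) := by
  apply tendsto_eval_of_approx hb1
  intro ε hε
  have hdense : b ∈ closure {b : selfAdjoint A | L b < ⊤} := hL.dense_finite b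
  rw [Metric.mem_closure_iff] at hdense
  obtain ⟨b', hb', hdist⟩ := hdense ε hε
  refine ⟨(b' : A), tendsto_eval_of_finite hL.seminorm hcauchy b' hb', ?_⟩
  rw [← dist_eq_norm, ← Subtype.dist_eq]
  exact hdist.le

lemma tendsto_eval (hL : IsECSMS L) (hb1 : ∀ n, ‖φn n‖ ≤ 1)
    (hcauchy : ∀ ε : ℝ≥0∞, 0 < ε → ∃ N : ℕ, ∀ m n : ℕ, N ≤ m → N ≤ n →
      dL L ⇑(φn m) ⇑(φn n) ≤ ε)
    (a : A) : ∃ l, Tendsto (fun n => φn n a) atTop (𝓝 l) := by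
  obtain ⟨l1, h1⟩ := tendsto_eval_sa hL hb1 hcauchy (realPart a)
  obtain ⟨l2, h2⟩ := tendsto_eval_sa hL hb1 hcauchy (imaginaryPart a)
  refine ⟨l1 + Complex.I * l2, ?_⟩
  have hdecomp := realPart_add_I_smul_imaginaryPart a
  have heq : (fun n => φn n a)
      = fun n => φn n (realPart a : A) + Complex.I * φn n (imaginaryPart a : A) := by
    funext n
    conv_lhs => rw [← hdecomp]
    rw [map_add, map_smul, smul_eq_mul]
  rw [heq]
  exact h1.add (h2.const_mul _)

end Limit

end DLAux

set_option maxHeartbeats 1000000 in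
/-- The state space of an extended complete spectral metric space is `d_L`-complete. -/
theorem dL_complete (L : selfAdjoint A → ℝ≥0∞) (hL : IsECSMS L)
    (φn : ℕ → A →L[ℂ] ℂ) (hφn : ∀ n, IsState (φn n))
    (hcauchy : ∀ ε : ℝ≥0∞, 0 < ε → ∃ N : ℕ, ∀ m n : ℕ, N ≤ m → N ≤ n →
      dL L ⇑(φn m) ⇑(φn n) ≤ ε) :
    ∃ φ : A →L[ℂ] ℂ, IsState φ ∧ Tendsto (fun n => dL L ⇑(φn n) ⇑φ) atTop (𝓝 0) := by
  classical
  have hnorm1 : ∀ n, ‖φn n‖ ≤ 1 := fun n => (hφn n).2.le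
  choose g hg using DLAux.tendsto_eval hL hnorm1 hcauchy
  have hadd : ∀ a b : A, g (a + b) = g a + g b := fun a b =>
    tendsto_nhds_unique (hg (a + b)) (by simpa only [map_add] using (hg a).add (hg b))
  have hsmul : ∀ (c : ℂ) (a : A), g (c • a) = c * g a := fun c a =>
    tendsto_nhds_unique (hg (c • a))
      (by simpa only [map_smul, smul_eq_mul] using (hg a).const_mul c)
  have hbound : ∀ a : A, ‖g a‖ ≤ 1 * ‖a‖ := by
    intro a
    refine le_of_tendsto (hg a).norm (Eventually.of_forall fun n => ?_)
    calc ‖φn n a‖ ≤ ‖φn n‖ * ‖a‖ := (φn n).le_opNorm a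
      _ ≤ 1 * ‖a‖ := mul_le_mul_of_nonneg_right (hnorm1 n) (norm_nonneg a)
  set φlin : A →ₗ[ℂ] ℂ :=
    { toFun := g, map_add' := hadd, map_smul' := fun c a => by simpa using hsmul c a } with hφlin
  set φ : A →L[ℂ] ℂ := φlin.mkContinuous 1 hbound with hφdef
  have hφa : ∀ a, Tendsto (fun n => φn n a) atTop (𝓝 (φ a)) := hg
  have hpos : ∀ a : A, 0 ≤ a → 0 ≤ φ a := by
    intro a ha
    rw [Complex.nonneg_iff]
    constructor
    · have hre : Tendsto (fun n => (φn n a).re) atTop (𝓝 (φ a).re) :=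
        (Complex.continuous_re.tendsto _).comp (hφa a)
      exact ge_of_tendsto hre
        (Eventually.of_forall fun n => (Complex.nonneg_iff.mp ((hφn n).1 a ha)).1)
    · have him : Tendsto (fun n => (φn n a).im) atTop (𝓝 (φ a).im) :=
        (Complex.continuous_im.tendsto _).comp (hφa a)
      have heq0 : (fun n => (φn n a).im) = fun _ => (0 : ℝ) :=
        funext fun n => ((Complex.nonneg_iff.mp ((hφn n).1 a ha)).2).symm
      rw [heq0] at him
      exact tendsto_nhds_unique tendsto_const_nhds him
  have hconv : ∀ ε : ℝ≥0∞, 0 < ε → ∃ N, ∀ n, N ≤ n → dL L ⇑(φn n) ⇑φ ≤ ε := by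
    intro ε hε
    obtain ⟨N, hN⟩ := hcauchy ε hε
    refine ⟨N, fun n hn => ?_⟩
    refine iSup_le ?_
    rintro ⟨b, hb⟩
    have htt : Tendsto (fun m => (‖φn n (b : A) - φn m (b : A)‖₊ : ℝ≥0∞)) atTop
        (𝓝 ((‖φn n (b : A) - φ (b : A)‖₊ : ℝ≥0∞))) :=
      ENNReal.tendsto_coe.2 ((tendsto_const_nhds.sub (hφa (b : A))).nnnorm)
    refine le_of_tendsto htt (eventually_atTop.2 ⟨N, fun m hm => ?_⟩)
    exact le_trans (le_iSup (fun b : {b : selfAdjoint A // L b ≤ 1} =>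
      (‖φn n (b.1 : A) - φn m (b.1 : A)‖₊ : ℝ≥0∞)) ⟨b, hb⟩) (hN n m hn hm)
  have hφnorm_le : ‖φ‖ ≤ 1 := φlin.mkContinuous_norm_le zero_le_one hbound
  obtain ⟨N1, hN1⟩ := hconv 1 one_pos
  set k := N1 with hkdef
  have hk : dL L ⇑(φn k) ⇑φ ≤ ((1 : ℝ≥0) : ℝ≥0∞) := by simpa using hN1 k le_rfl
  obtain ⟨D⟩ := hL.approxUnit
  letI : Preorder D.ι := D.pre
  haveI : Nonempty D.ι := D.ne
  haveI : IsDirected D.ι (· ≤ ·) := D.dir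
  have hge : ∀ η : ℝ, 0 < η → η < 1 → 1 - 3 * η ≤ ‖φ‖ := by
    intro η hη hη1
    obtain ⟨a, ha1, ha2⟩ : ∃ a : A, ‖a‖ ≤ 1 ∧ 1 - η / 2 < ‖φn k a‖ := by
      by_contra hcon
      push_neg at hcon
      have hub : ∀ x : A, ‖φn k x‖ ≤ (1 - η / 2) * ‖x‖ := by
        intro x
        rcases eq_or_ne x 0 with rfl | hx
        · simp
        · have hxn : 0 < ‖x‖ := norm_pos_iff.mpr hx
          have hxu : ‖(‖x‖⁻¹ : ℝ) • x‖ ≤ 1 := by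
            rw [norm_smul, norm_inv, norm_norm, inv_mul_cancel₀ hxn.ne']
          have hcx := hcon _ hxu
          rw [(φn k).map_smul_of_tower, norm_smul, norm_inv, norm_norm] at hcx
          have hmul := mul_le_mul_of_nonneg_left hcx hxn.le
          rw [← mul_assoc, mul_inv_cancel₀ hxn.ne', one_mul] at hmul
          linarith [hmul]
      have hball : ‖φn k‖ ≤ 1 - η / 2 := (φn k).opNorm_le_bound (by linarith) hub
      rw [(hφn k).2] at hball
      linarith
    have hIa := (D.isAU.2.2 a).1
    have hev1 : ∀ᶠ n in atTop, ‖(D.I n : A) * a - a‖ < η / 2 :=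
      hIa.eventually_lt_const (by positivity)
    have hev2 : ∀ᶠ n in atTop, L (D.I n) < ENNReal.ofReal η :=
      D.tendsto_L.eventually_lt_const (ENNReal.ofReal_pos.mpr hη)
    obtain ⟨n, hn1, hn2⟩ := (hev1.and hev2).exists
    set In : A := (D.I n : A) with hIn
    have hIpos : 0 ≤ In := D.isAU.1 n
    have hInorm : ‖In‖ ≤ 1 := D.isAU.2.1 n
    have hIsa : IsSelfAdjoint In := (D.I n).2
    have hposk := (hφn k).1
    have hcs := DLAux.cauchy_schwarz (φn k) hposk In a
    rw [hIsa.star_eq] at hcs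
    have haa : (φn k (star a * a)).re ≤ 1 := by
      calc (φn k (star a * a)).re ≤ ‖φn k (star a * a)‖ := by
            exact Complex.re_le_norm _
        _ ≤ ‖φn k‖ * ‖star a * a‖ := (φn k).le_opNorm _
        _ ≤ 1 * (‖star a‖ * ‖a‖) :=
            mul_le_mul (hφn k).2.le (norm_mul_le _ _) (norm_nonneg _) zero_le_one
        _ ≤ 1 := by rw [norm_star, one_mul]; nlinarith [norm_nonneg a]
    have hII : (φn k (In * In)).re ≤ (φn k In).re :=
      DLAux.re_mono (φn k) hposk (DLAux.mul_self_le_self hIpos hInorm)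
    have hre_aa : 0 ≤ (φn k (star a * a)).re :=
      DLAux.re_nonneg_of_pos (hposk _ (star_mul_self_nonneg a))
    have hre_I : 0 ≤ (φn k In).re := DLAux.re_nonneg_of_pos (hposk In hIpos)
    have h3 : ‖φn k (In * a)‖ ^ 2 ≤ (φn k In).re := by
      calc ‖φn k (In * a)‖ ^ 2 ≤ (φn k (In * In)).re * (φn k (star a * a)).re := hcs
        _ ≤ (φn k In).re * 1 := mul_le_mul hII haa hre_aa hre_I
        _ = (φn k In).re := mul_one _
    have h4 : 1 - η ≤ ‖φn k (In * a)‖ := by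
      have hdiff : ‖φn k (In * a) - φn k a‖ ≤ η / 2 := by
        calc ‖φn k (In * a) - φn k a‖ = ‖φn k (In * a - a)‖ := by rw [map_sub]
          _ ≤ ‖φn k‖ * ‖In * a - a‖ := (φn k).le_opNorm _
          _ ≤ 1 * (η / 2) := mul_le_mul (hφn k).2.le hn1.le (norm_nonneg _) zero_le_one
          _ = η / 2 := one_mul _
      have htri := norm_sub_norm_le (φn k a) (φn k (In * a))
      rw [norm_sub_rev] at hdiff
      linarith
    have h5 : 1 - 2 * η ≤ (φn k In).re := by nlinarith [h3, h4, norm_nonneg (φn k (In * a))]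
    have hdφ : ‖φn k In - φ In‖ ≤ η * ((1 : ℝ≥0) : ℝ) :=
      DLAux.dist_apply_le L hL.seminorm hk (D.I n) hη hn2.le
    rw [NNReal.coe_one, mul_one] at hdφ
    have hre_abs : |(φn k In).re - (φ In).re| ≤ η := by
      have habs : |(φn k In - φ In).re| ≤ ‖φn k In - φ In‖ := by
        exact Complex.abs_re_le_norm _
      rw [Complex.sub_re] at habs
      linarith
    have h6 : 1 - 3 * η ≤ (φ In).re := by
      have := abs_le.mp hre_abs
      linarith [this.1, this.2]
    calc 1 - 3 * η ≤ (φ In).re := h6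
      _ ≤ ‖φ In‖ := by exact Complex.re_le_norm _
      _ ≤ ‖φ‖ * ‖In‖ := φ.le_opNorm _
      _ ≤ ‖φ‖ := mul_le_of_le_one_right (norm_nonneg _) hInorm
  have hφnorm : ‖φ‖ = 1 := by
    refine le_antisymm hφnorm_le ?_
    refine le_of_forall_pos_le_add ?_
    intro ε hε
    set η := min (ε / 3) (1 / 2) with hηdef
    have hη : 0 < η := lt_min (by positivity) one_half_pos
    have hη1 : η < 1 := lt_of_le_of_lt (min_le_right _ _) (by norm_num)
    have hmain := hge η hη hη1
    have h3η : 3 * η ≤ ε := by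
      have := min_le_left (ε / 3) (1 / 2)
      have : η ≤ ε / 3 := min_le_left _ _
      linarith
    linarith
  refine ⟨φ, ⟨hpos, hφnorm⟩, ?_⟩
  rw [ENNReal.tendsto_atTop_zero]
  intro ε hε
  obtain ⟨N, hN⟩ := hconv ε hε
  exact ⟨N, hN⟩
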